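/- Let q be a prime power, n a prime number, t a positive integer, N = nt, m a positive integer dividing q^n − 1, and 1 ≤ s < k. Let a_0, a_s be nonzero elements of 𝔽_{q^N} and let V be a k-dimensional 𝔽_q-subspace of 𝔽_{q^N} whose subspace polynomial is L_V(X) = X^{q^k} + a_s X^{q^s} + a_0 X. Consider the code C := ∪_{i=0}^{n−1} {α^m σ_i(V) : α ∈ 𝔽_{q^N}^*}. Then any two distinct codewords W₁ ≠ W₂ of C satisfy dim_{𝔽_q}(W₁ ∩ W₂) ≤ s, and hence the minimum subspace distance of C is at least 2(k − s). -/

import Mathlib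

open Polynomial

/-- The `m`-quasi cyclic shift of a subspace `V` by `a`: `a • V = {a * v : v ∈ V}`. -/
noncomputable def qshift {K F : Type*} [Field K] [Field F] [Algebra K F]
    (a : F) (V : Submodule K F) : Submodule K F :=
  V.map (LinearMap.mulLeft K a)

/-- The subspace polynomial `L_V(X) = ∏_{v ∈ V} (X - v)` of a subspace `V` of a
finite field. -/
noncomputable def subspacePoly {K F : Type*} [Field K] [Field F] [Algebra K F] [Fintype F]
    (V : Submodule K F) : F[X] :=
  ∏ v ∈ (Set.toFinite (V : Set F)).toFinset, (X - C v)

/-- The subspace distance `d(U,V) = dim U + dim V - 2 dim (U ⊓ V)`. -/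
noncomputable def subspaceDist {K F : Type*} [Field K] [Field F] [Algebra K F]
    (U V : Submodule K F) : ℕ :=
  Module.finrank K U + Module.finrank K V - 2 * Module.finrank K ↥(U ⊓ V)

/-- Auxiliary: a finset of roots of a nonzero polynomial has cardinality at most
any bound on the natDegree. -/
lemma aux_card_roots_le {F : Type*} [Field F] (p : F[X]) (hp : p ≠ 0) (d : ℕ)
    (hd : p.natDegree ≤ d) (S : Finset F) (hS : ∀ x ∈ S, p.eval x = 0) : S.card ≤ d := by
  classical
  have h : S ⊆ p.roots.toFinset := fun x hx =>
    Multiset.mem_toFinset.2 ((Polynomial.mem_roots hp).2 (hS x hx))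
  calc S.card ≤ p.roots.toFinset.card := Finset.card_le_card h
    _ ≤ Multiset.card p.roots := Multiset.toFinset_card_le _
    _ ≤ p.natDegree := Polynomial.card_roots' p
    _ ≤ d := hd

theorem frobenius_quasi_orbit_code_distance
    {K F : Type*} [Field K] [Fintype K] [Field F] [Fintype F] [Algebra K F]
    (q n t N m k s : ℕ) (hq : Fintype.card K = q)
    (hnp : n.Prime) (ht : 0 < t) (hN : N = n * t)
    (hF : Module.finrank K F = N) (hm : 0 < m) (hmdvd : m ∣ q ^ n - 1)
    (hs1 : 1 ≤ s) (hsk : s < k)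
    (a0 as : F) (ha0 : a0 ≠ 0) (has : as ≠ 0)
    (V : Submodule K F) (hVk : Module.finrank K ↥V = k)
    (hLV : subspacePoly V = X ^ q ^ k + C as * X ^ q ^ s + C a0 * X) :
    ∀ W₁ ∈ {W : Submodule K F | ∃ i < n, ∃ α : F, α ≠ 0 ∧
        (W : Set F) = (fun v => α ^ m * v ^ q ^ i) '' (V : Set F)},
      ∀ W₂ ∈ {W : Submodule K F | ∃ i < n, ∃ α : F, α ≠ 0 ∧
        (W : Set F) = (fun v => α ^ m * v ^ q ^ i) '' (V : Set F)},
      W₁ ≠ W₂ →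
        Module.finrank K ↥(W₁ ⊓ W₂) ≤ s ∧ 2 * (k - s) ≤ subspaceDist W₁ W₂ := by
  classical
  have hq2 : 2 ≤ q := by rw [← hq]; exact Fintype.one_lt_card
  have hsklt : q ^ s < q ^ k := Nat.pow_lt_pow_right (by omega) hsk
  have hs2 : 2 ≤ q ^ s := le_trans hq2 (Nat.le_self_pow (by omega) q)
  -- characteristic facts
  set p := ringChar K with hpdef
  haveI : CharP K p := ringChar.charP K
  have hp : p.Prime := CharP.char_is_prime K p
  haveI := Fact.mk hp
  haveI : CharP F p := charP_of_injective_algebraMap (algebraMap K F).injective p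
  obtain ⟨e, -, hqe⟩ := FiniteField.card K p
  have hqp : ∀ r : ℕ, q ^ r = p ^ ((e : ℕ) * r) := fun r => by rw [← hq, hqe, pow_mul]
  have frob_add : ∀ (r : ℕ) (x y : F), (x + y) ^ q ^ r = x ^ q ^ r + y ^ q ^ r := by
    intro r x y; rw [hqp r, add_pow_char_pow]
  have frob_sub : ∀ (r : ℕ) (x y : F), (x - y) ^ q ^ r = x ^ q ^ r - y ^ q ^ r := by
    intro r x y; rw [hqp r, sub_pow_char_pow]
  -- every element of V is a root of the trinomial
  have hVroot : ∀ v ∈ V, v ^ q ^ k + as * v ^ q ^ s + a0 * v = 0 := by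
    intro v hv
    have h1 : (subspacePoly V).eval v = 0 := by
      unfold subspacePoly
      rw [Polynomial.eval_prod]
      exact Finset.prod_eq_zero ((Set.toFinite (V : Set F)).mem_toFinset.2 hv) (by simp)
    rw [hLV] at h1
    simpa using h1
  -- trinomial coefficients attached to a codeword
  set B : ℕ → F → F := fun i α => as ^ q ^ i * (α ^ m) ^ (q ^ k - q ^ s) with hBdef
  set Cf : ℕ → F → F := fun i α => a0 ^ q ^ i * (α ^ m) ^ (q ^ k - 1) with hCdef
  set Z : ℕ → F → Set F :=
    fun i α => {x : F | x ^ q ^ k + B i α * x ^ q ^ s + Cf i α * x = 0} with hZdef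
  -- forward inclusion
  have forward : ∀ (i : ℕ) (α : F), ∀ x ∈ (fun v => α ^ m * v ^ q ^ i) '' (V : Set F),
      x ∈ Z i α := by
    rintro i α x ⟨u, hu, rfl⟩
    have h1 := hVroot u hu
    have h2 : (u ^ q ^ k) ^ q ^ i + as ^ q ^ i * (u ^ q ^ s) ^ q ^ i
        + a0 ^ q ^ i * u ^ q ^ i = 0 := by
      have h3 := congrArg (· ^ q ^ i) h1
      simp only [frob_add, mul_pow] at h3
      simpa [zero_pow (pow_ne_zero i (by omega : q ≠ 0))] using h3
    have hγ : (α ^ m) ^ (q ^ k - q ^ s) * (α ^ m) ^ (q ^ s) = (α ^ m) ^ (q ^ k) :=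
      pow_sub_mul_pow _ (le_of_lt hsklt)
    have hδ : (α ^ m) ^ (q ^ k - 1) * (α ^ m) ^ 1 = (α ^ m) ^ (q ^ k) :=
      pow_sub_mul_pow _ (by omega)
    simp only [hZdef, hBdef, hCdef, Set.mem_setOf_eq]
    linear_combination (α ^ m) ^ (q ^ k) * h2
      + as ^ q ^ i * (u ^ q ^ i) ^ (q ^ s) * hγ + a0 ^ q ^ i * u ^ q ^ i * hδ
  -- injectivity of the shift maps
  have hinj : ∀ (i : ℕ) (α : F), α ≠ 0 →
      Function.Injective (fun v : F => α ^ m * v ^ q ^ i) := by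
    intro i α hα x y hxy
    simp only at hxy
    have h1 : x ^ q ^ i = y ^ q ^ i := mul_left_cancel₀ (pow_ne_zero _ hα) hxy
    have h2 : (x - y) ^ q ^ i = 0 := by rw [frob_sub, h1, sub_self]
    have h3 := pow_eq_zero_iff (pow_ne_zero i (by omega : q ≠ 0)) |>.mp h2
    exact sub_eq_zero.mp h3
  -- the codeword is exactly the root set of its trinomial, and has dimension k
  have hWZ : ∀ (W : Submodule K F) (i : ℕ) (α : F), α ≠ 0 →
      (W : Set F) = (fun v => α ^ m * v ^ q ^ i) '' (V : Set F) →
      (W : Set F) = Z i α ∧ Module.finrank K ↥W = k := by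
    intro W i α hα hW
    have hsub : (W : Set F) ⊆ Z i α := by
      rw [hW]; intro x hx; exact forward i α x hx
    have hcardV : (V : Set F).ncard = q ^ k := by
      rw [Set.ncard_eq_toFinset_card', Set.toFinset_card, ← hq, ← hVk]
      exact Fintype.card_congr (Equiv.setCongr rfl) |>.trans Module.card_eq_pow_finrank
    have hcardW : (W : Set F).ncard = q ^ k := by
      rw [hW, Set.ncard_image_of_injective _ (hinj i α hα)]; exact hcardV
    -- the trinomial
    set P : F[X] := X ^ q ^ k + C (B i α) * X ^ q ^ s + C (Cf i α) * X with hPdef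
    have hcoeff : P.coeff (q ^ k) = 1 := by
      simp only [hPdef, coeff_add, coeff_X_pow, coeff_C_mul, Polynomial.coeff_X]
      rw [if_neg (by omega : ¬ q ^ k = q ^ s), if_neg (by omega : ¬ 1 = q ^ k)]
      simp
    have hPne : P ≠ 0 := by
      intro h
      rw [h] at hcoeff
      simp at hcoeff
    have hPdeg : P.natDegree ≤ q ^ k := by
      refine le_trans (natDegree_add_le _ _) ?_
      simp only [max_le_iff]
      constructor
      · refine le_trans (natDegree_add_le _ _) ?_
        simp only [max_le_iff]
        refine ⟨le_of_eq (natDegree_X_pow _), ?_⟩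
        refine le_trans (natDegree_C_mul_le _ _) ?_
        simp [natDegree_X_pow]; omega
      · refine le_trans (natDegree_C_mul_le _ _) ?_
        simp [natDegree_X]; omega
    have hZcard : (Z i α).ncard ≤ q ^ k := by
      rw [Set.ncard_eq_toFinset_card']
      refine aux_card_roots_le P hPne _ hPdeg _ ?_
      intro x hx
      rw [Set.mem_toFinset] at hx
      simp only [hZdef, Set.mem_setOf_eq] at hx
      simp [hPdef, hx]
    have hset : (W : Set F) = Z i α :=
      Set.eq_of_subset_of_ncard_le hsub (by omega) (Set.toFinite _)
    refine ⟨hset, ?_⟩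
    have : q ^ Module.finrank K ↥W = q ^ k := by
      rw [← hq, ← Module.card_eq_pow_finrank (K := K) (V := ↥W), hq]
      rw [Set.ncard_eq_toFinset_card', Set.toFinset_card] at hcardW
      rw [← hcardW]
      exact Fintype.card_congr (Equiv.setCongr rfl).symm
    exact Nat.pow_right_injective hq2 this
  -- main argument
  rintro W₁ ⟨i, hi, α, hα, hW₁⟩ W₂ ⟨j, hj, β, hβ, hW₂⟩ hne
  obtain ⟨hZ₁, hr₁⟩ := hWZ W₁ i α hα hW₁
  obtain ⟨hZ₂, hr₂⟩ := hWZ W₂ j β hβ hW₂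
  by_cases hBC : B i α = B j β ∧ Cf i α = Cf j β
  · exfalso
    apply hne
    apply SetLike.coe_injective
    rw [hZ₁, hZ₂, hZdef]
    simp only [hBC.1, hBC.2]
  · -- the difference polynomial
    have hroot : ∀ x ∈ (W₁ ⊓ W₂ : Submodule K F),
        (B i α - B j β) * x ^ q ^ s + (Cf i α - Cf j β) * x = 0 := by
      intro x hx
      rw [Submodule.mem_inf] at hx
      have h1 : x ∈ Z i α := hZ₁ ▸ hx.1
      have h2 : x ∈ Z j β := hZ₂ ▸ hx.2
      simp only [hZdef, Set.mem_setOf_eq] at h1 h2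
      linear_combination h1 - h2
    set PD : F[X] := C (B i α - B j β) * X ^ q ^ s + C (Cf i α - Cf j β) * X with hPDdef
    have hco1 : PD.coeff (q ^ s) = B i α - B j β := by
      simp only [hPDdef, coeff_add, coeff_X_pow, coeff_C_mul, Polynomial.coeff_X]
      rw [if_neg (by omega : ¬ (1 : ℕ) = q ^ s)]
      simp
    have hco2 : PD.coeff 1 = Cf i α - Cf j β := by
      simp only [hPDdef, coeff_add, coeff_X_pow, coeff_C_mul, Polynomial.coeff_X]
      rw [if_neg (by omega : ¬ 1 = q ^ s)]
      simp
    have hPDne : PD ≠ 0 := by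
      intro h
      rw [h, coeff_zero] at hco1 hco2
      exact hBC ⟨sub_eq_zero.mp hco1.symm, sub_eq_zero.mp hco2.symm⟩
    have hPDdeg : PD.natDegree ≤ q ^ s := by
      refine le_trans (natDegree_add_le _ _) ?_
      simp only [max_le_iff]
      constructor
      · refine le_trans (natDegree_C_mul_le _ _) ?_
        simp [natDegree_X_pow]
      · refine le_trans (natDegree_C_mul_le _ _) ?_
        simp [natDegree_X]; omega
    have hd : Module.finrank K ↥(W₁ ⊓ W₂) ≤ s := by
      have hcard : ((W₁ ⊓ W₂ : Submodule K F) : Set F).ncard ≤ q ^ s := by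
        rw [Set.ncard_eq_toFinset_card']
        refine aux_card_roots_le PD hPDne _ hPDdeg _ ?_
        intro x hx
        rw [Set.mem_toFinset] at hx
        have := hroot x hx
        simp [hPDdef, this]
      have hcard2 : q ^ Module.finrank K ↥(W₁ ⊓ W₂) ≤ q ^ s := by
        rw [← hq, ← Module.card_eq_pow_finrank (K := K) (V := ↥(W₁ ⊓ W₂)), hq]
        rw [Set.ncard_eq_toFinset_card', Set.toFinset_card] at hcard
        calc Fintype.card ↥(W₁ ⊓ W₂)
            = Fintype.card ↥((W₁ ⊓ W₂ : Submodule K F) : Set F) :=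
              Fintype.card_congr (Equiv.setCongr rfl)
          _ ≤ q ^ s := hcard
      exact (Nat.pow_le_pow_iff_right hq2).mp hcard2
    refine ⟨hd, ?_⟩
    unfold subspaceDist
    rw [hr₁, hr₂]
    omega
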